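/- If V: S^{m-1} → S^{m-1} is a bistochastic quadratic operator (V(x) ≺ x for all x), then its coefficients satisfy Σ_{i,j=1}^m P_{ij,k} = m for every k. -/

import Mathlib

/-- `x ≺ y`: for every `t`, the sum of any `t` coordinates of `x` is at most the sum of
some `t` coordinates of `y` (equivalently, the sum of the `t` largest coordinates of `x`
is at most the sum of the `t` largest coordinates of `y`). -/
def IsMajorizedBy {m : ℕ} (x y : Fin m → ℝ) : Prop :=
  ∀ A : Finset (Fin m), ∃ B : Finset (Fin m),
    B.card = A.card ∧ ∑ i ∈ A, x i ≤ ∑ i ∈ B, y i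

/-- If `V` is a bistochastic quadratic operator (`V(x) ≺ x` for all
`x ∈ S^{m-1}`), then `∑_{i,j} P_{ij,k} = m` for every `k`. -/
theorem bistochastic_qso_coefficient_sum (m : ℕ)
    (P : Fin m → Fin m → Fin m → ℝ)
    (hpos : ∀ i j k, 0 ≤ P i j k)
    (hsym : ∀ i j k, P i j k = P j i k)
    (hsum : ∀ i j, ∑ k, P i j k = 1)
    (V : (Fin m → ℝ) → (Fin m → ℝ))
    (hV : ∀ x k, V x k = ∑ i, ∑ j, P i j k * x i * x j)
    (hbis : ∀ x : Fin m → ℝ, ((∀ i, 0 ≤ x i) ∧ ∑ i, x i = 1) →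
      IsMajorizedBy (V x) x) :
    ∀ k, ∑ i, ∑ j, P i j k = (m : ℝ) := by
  intro k
  have hm : 0 < m := Fin.pos_iff_nonempty.mpr ⟨k⟩
  have hm' : (0:ℝ) < m := by exact_mod_cast hm
  set x : Fin m → ℝ := fun _ => 1 / m with hx
  have hxc : (∀ i, 0 ≤ x i) ∧ ∑ i, x i = 1 := by
    constructor
    · intro i; positivity
    · simp only [hx, Finset.sum_const, Finset.card_univ, Fintype.card_fin, nsmul_eq_mul]
      field_simp
  have hmaj := hbis x hxc
  have hVval : ∀ j, V x j = (∑ i, ∑ i', P i i' j) / m^2 := by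
    intro j
    rw [hV, Finset.sum_div]
    refine Finset.sum_congr rfl fun i _ => ?_
    rw [Finset.sum_div]
    refine Finset.sum_congr rfl fun i' _ => ?_
    simp only [hx]
    rw [pow_two]
    field_simp
  have hVsum : ∑ j, V x j = 1 := by
    simp only [hVval]
    rw [← Finset.sum_div]
    have key : ∑ j, ∑ i, ∑ i', P i i' j = ∑ i, ∑ i', ∑ j, P i i' j := by
      rw [Finset.sum_comm]
      exact Finset.sum_congr rfl fun i _ => by rw [Finset.sum_comm]
    rw [key]
    simp only [hsum, Finset.sum_const, Finset.card_univ, Fintype.card_fin, nsmul_eq_mul,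
      mul_one]
    field_simp
  -- upper bound
  have hub : V x k ≤ 1 / m := by
    obtain ⟨B, hBcard, hB⟩ := hmaj {k}
    have : ∑ i ∈ B, x i = 1 / m := by
      simp only [hx, Finset.sum_const, nsmul_eq_mul, hBcard, Finset.card_singleton]
      ring
    rw [this] at hB
    simpa using hB
  -- lower bound
  have hlb : 1 / m ≤ V x k := by
    obtain ⟨B, hBcard, hB⟩ := hmaj ({k}ᶜ)
    have hcardc : ({k}ᶜ : Finset (Fin m)).card = m - 1 := by
      simp [Finset.card_compl]
    have hBx : ∑ i ∈ B, x i = ((m:ℝ) - 1) / m := by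
      simp only [hx, Finset.sum_const, nsmul_eq_mul, hBcard, hcardc]
      rw [Nat.cast_sub hm]
      push_cast
      ring
    rw [hBx] at hB
    have hsplit : ∑ i ∈ ({k}ᶜ : Finset (Fin m)), V x i = 1 - V x k := by
      have := Finset.sum_compl_add_sum ({k} : Finset (Fin m)) (V x)
      simp only [Finset.sum_singleton] at this
      linarith [hVsum, this.symm ▸ hVsum]
    rw [hsplit] at hB
    have hq : ((m:ℝ) - 1) / m = 1 - 1 / m := by field_simp
    rw [hq] at hB
    linarith
  have hVk : V x k = 1 / m := le_antisymm hub hlb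
  rw [hVval] at hVk
  field_simp at hVk
  nlinarith [sq_nonneg ((m:ℝ))]
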